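/- Let m ≥ 3 be an integer and set d = 2m ≥ 6. Let β ∈ ℝ, r > 0 with |β| < r, set α = √(r² − β²) > 0, let L > 0, and write θ₀ = arctan(β/α), θ₁ = arctan((β + L)/α). Then ∫₀^L (t² + 2βt + r²)^{1−m} dt = α^{3−d} [ 2^{5−d} Σ_{i=0}^{m−3} C(d−4, i) ( sin((d−4−2i)θ₁) − sin((d−4−2i)θ₀) ) / (d−4−2i) + 2^{4−d} C(d−4, m−2) (θ₁ − θ₀) ], where C(n, k) denotes the binomial coefficient. -/

import Mathlib

open Finset in
lemma aux_expand (k : ℕ) (θ : ℝ) :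
    (2 * Real.cos θ) ^ (2 * k) =
      ∑ j ∈ range (2 * k + 1),
        (Nat.choose (2 * k) j : ℝ) * Real.cos (((j : ℝ) * 2 - 2 * k) * θ) := by
  have h := add_pow (Complex.exp (θ * Complex.I)) (Complex.exp (-θ * Complex.I)) (2 * k)
  rw [← Complex.two_cos] at h
  have h2 : ∀ j ∈ range (2 * k + 1),
      Complex.exp (θ * Complex.I) ^ j * Complex.exp (-θ * Complex.I) ^ (2 * k - j)
        * (Nat.choose (2 * k) j : ℂ)
      = (Nat.choose (2 * k) j : ℂ) * Complex.exp ((((j : ℝ) * 2 - 2 * k) * θ : ℝ) * Complex.I) := by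
    intro j hj
    rw [mem_range] at hj
    rw [← Complex.exp_nat_mul, ← Complex.exp_nat_mul, ← Complex.exp_add]
    have : (j : ℂ) * (θ * Complex.I) + (2 * k - j : ℕ) * (-θ * Complex.I)
        = (((j : ℝ) * 2 - 2 * k) * θ : ℝ) * Complex.I := by
      have hcast : ((2 * k - j : ℕ) : ℂ) = 2 * k - j := by
        push_cast [Nat.cast_sub (by omega : j ≤ 2 * k)]; ring
      rw [hcast]; push_cast; ring
    rw [this, mul_comm]
  rw [Finset.sum_congr rfl h2] at h
  have := congrArg Complex.re h
  rw [Complex.re_sum] at this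
  have hl : ((2 : ℂ) * Complex.cos θ) ^ (2 * k) = (((2 * Real.cos θ : ℝ)) : ℂ) ^ (2 * k) := by
    push_cast [Complex.ofReal_cos]; ring_nf
  rw [hl, ← Complex.ofReal_pow] at this
  simp only [Complex.ofReal_re] at this
  rw [this]
  apply Finset.sum_congr rfl
  intro j hj
  rw [Complex.mul_re]
  simp only [Complex.natCast_re, Complex.natCast_im, zero_mul, sub_zero,
    Complex.exp_ofReal_mul_I_re]

open Finset in
lemma cos_pow_even (k : ℕ) (θ : ℝ) :
    (2 * Real.cos θ) ^ (2 * k) =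
      2 * ∑ i ∈ range k, (Nat.choose (2 * k) i : ℝ) * Real.cos (((2 * k - 2 * i : ℕ) : ℝ) * θ)
        + (Nat.choose (2 * k) k : ℝ) := by
  rw [aux_expand]
  have hsplit : range (2 * k + 1) = range k ∪ Finset.Ico k (2 * k + 1) := by
    rw [Finset.range_eq_Ico, Finset.range_eq_Ico, Finset.Ico_union_Ico_eq_Ico] <;> omega
  rw [hsplit, Finset.sum_union (by
    rw [Finset.range_eq_Ico]; exact Finset.Ico_disjoint_Ico_consecutive 0 k (2 * k + 1))]
  have h1 : ∑ j ∈ range k, (Nat.choose (2 * k) j : ℝ) * Real.cos (((j : ℝ) * 2 - 2 * k) * θ)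
      = ∑ i ∈ range k, (Nat.choose (2 * k) i : ℝ) * Real.cos (((2 * k - 2 * i : ℕ) : ℝ) * θ) := by
    apply Finset.sum_congr rfl
    intro i hi
    rw [mem_range] at hi
    congr 1
    rw [← Real.cos_neg (((i : ℝ) * 2 - 2 * k) * θ)]
    congr 1
    push_cast [Nat.cast_sub (by omega : 2 * i ≤ 2 * k)]
    ring
  have h2 : ∑ j ∈ Finset.Ico k (2 * k + 1),
        (Nat.choose (2 * k) j : ℝ) * Real.cos (((j : ℝ) * 2 - 2 * k) * θ)
      = (Nat.choose (2 * k) k : ℝ)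
        + ∑ i ∈ range k, (Nat.choose (2 * k) i : ℝ) * Real.cos (((2 * k - 2 * i : ℕ) : ℝ) * θ) := by
    rw [Finset.sum_Ico_eq_sum_range]
    have hn : 2 * k + 1 - k = k + 1 := by omega
    rw [hn, Finset.sum_range_succ']
    have hz : ((((k + 0 : ℕ)) : ℝ) * 2 - 2 * (k : ℝ)) * θ = 0 := by push_cast; ring
    rw [add_comm]
    congr 1
    · rw [hz, Real.cos_zero]; norm_num
    · conv_rhs => rw [← Finset.sum_range_reflect]
      apply Finset.sum_congr rfl
      intro j hj
      rw [mem_range] at hj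
      have e1 : Nat.choose (2 * k) (k + (j + 1)) = Nat.choose (2 * k) (k - 1 - j) := by
        have := Nat.choose_symm (show k + (j + 1) ≤ 2 * k by omega)
        rw [show 2 * k - (k + (j + 1)) = k - 1 - j by omega] at this
        exact this.symm
      rw [e1]
      congr 2
      have e2 : 2 * k - 2 * (k - 1 - j) = 2 * j + 2 := by omega
      rw [e2]
      push_cast
      ring
  rw [h1, h2]; ring


set_option maxHeartbeats 2000000 in
/-- Explicit evaluation, in even dimensions `d = 2m ≥ 6`, of the integral
`∫₀^L (t² + 2βt + r²)^{1−m} dt` appearing in the construction of the line-source singular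
function `Φ_L`, where `α = √(r² − β²) > 0`, `θ₀ = arctan(β/α)` and `θ₁ = arctan((β+L)/α)`. -/
theorem lineSource_integral_even_dim (m : ℕ) (hm : 3 ≤ m) (d : ℕ) (hd : d = 2 * m)
    (β r α L : ℝ) (hr : 0 < r) (hβ : |β| < r) (hα : α = Real.sqrt (r ^ 2 - β ^ 2))
    (hL : 0 < L) (θ₀ θ₁ : ℝ) (hθ₀ : θ₀ = Real.arctan (β / α))
    (hθ₁ : θ₁ = Real.arctan ((β + L) / α)) :
    (∫ t in (0:ℝ)..L, (t ^ 2 + 2 * β * t + r ^ 2) ^ ((1 : ℤ) - m)) =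
      α ^ ((3:ℤ) - d) *
        ((2:ℝ) ^ ((5:ℤ) - d) *
            ∑ i ∈ Finset.range (m - 2),
              (Nat.choose (d - 4) i : ℝ) *
                (Real.sin (((d - 4 - 2 * i : ℕ) : ℝ) * θ₁)
                  - Real.sin (((d - 4 - 2 * i : ℕ) : ℝ) * θ₀)) / ((d - 4 - 2 * i : ℕ) : ℝ)
          + (2:ℝ) ^ ((4:ℤ) - d) * (Nat.choose (d - 4) (m - 2) : ℝ) * (θ₁ - θ₀)) := by
  obtain ⟨K, rfl, hK1⟩ : ∃ K, m = K + 2 ∧ 1 ≤ K := ⟨m - 2, by omega, by omega⟩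
  subst hd
  rw [show 2 * (K + 2) - 4 = 2 * K by omega, show K + 2 - 2 = K by omega]
  -- basic positivity facts
  have hβ2 : β ^ 2 < r ^ 2 := by nlinarith [sq_abs β, abs_nonneg β]
  have hαpos : 0 < α := by rw [hα]; exact Real.sqrt_pos.mpr (by nlinarith)
  have hα2 : α ^ 2 = r ^ 2 - β ^ 2 := by rw [hα]; exact Real.sq_sqrt (by nlinarith)
  have hqpos : ∀ t : ℝ, 0 < t ^ 2 + 2 * β * t + r ^ 2 := by
    intro t; nlinarith [sq_nonneg (t + β)]
  set θf : ℝ → ℝ := fun x => Real.arctan ((x + β) / α) with hθf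
  have hθ0' : θ₀ = θf 0 := by rw [hθ₀, hθf]; norm_num
  have hθ1' : θ₁ = θf L := by rw [hθ₁, hθf]; rw [add_comm]
  -- derivative of θf
  have hdθ : ∀ x : ℝ, HasDerivAt θf (α / (x ^ 2 + 2 * β * x + r ^ 2)) x := by
    intro x
    have h1 : HasDerivAt (fun y : ℝ => (y + β) / α) (1 / α) x := by
      simpa using ((hasDerivAt_id x).add_const β).div_const α
    have h2 := (Real.hasDerivAt_arctan ((x + β) / α)).comp x h1
    refine h2.congr_deriv ?_
    symm
    have hden : 1 + ((x + β) / α) ^ 2 = (x ^ 2 + 2 * β * x + r ^ 2) / α ^ 2 := by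
      field_simp
      nlinarith [hα2]
    rw [hden]
    field_simp
  -- antiderivative
  set F : ℝ → ℝ := fun x =>
    α ^ ((3:ℤ) - ((2 * (K + 2) : ℕ) : ℤ)) *
      ((2:ℝ) ^ ((5:ℤ) - ((2 * (K + 2) : ℕ) : ℤ)) *
          ∑ i ∈ Finset.range K,
            (Nat.choose (2 * K) i : ℝ) *
              (Real.sin (((2 * K - 2 * i : ℕ) : ℝ) * θf x) / ((2 * K - 2 * i : ℕ) : ℝ))
        + (2:ℝ) ^ ((4:ℤ) - ((2 * (K + 2) : ℕ) : ℤ)) * (Nat.choose (2 * K) K : ℝ) * θf x)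
    with hF
  have hRHS :
      α ^ ((3:ℤ) - ((2 * (K + 2) : ℕ) : ℤ)) *
        ((2:ℝ) ^ ((5:ℤ) - ((2 * (K + 2) : ℕ) : ℤ)) *
            ∑ i ∈ Finset.range K,
              (Nat.choose (2 * K) i : ℝ) *
                (Real.sin (((2 * K - 2 * i : ℕ) : ℝ) * θ₁)
                  - Real.sin (((2 * K - 2 * i : ℕ) : ℝ) * θ₀)) / ((2 * K - 2 * i : ℕ) : ℝ)
          + (2:ℝ) ^ ((4:ℤ) - ((2 * (K + 2) : ℕ) : ℤ)) * (Nat.choose (2 * K) K : ℝ) * (θ₁ - θ₀))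
      = F L - F 0 := by
    rw [hF, hθ0', hθ1']
    have hd2 : ∑ i ∈ Finset.range K,
        (Nat.choose (2 * K) i : ℝ) *
          (Real.sin (((2 * K - 2 * i : ℕ) : ℝ) * θf L)
            - Real.sin (((2 * K - 2 * i : ℕ) : ℝ) * θf 0)) / ((2 * K - 2 * i : ℕ) : ℝ)
        = (∑ i ∈ Finset.range K,
            (Nat.choose (2 * K) i : ℝ) *
              (Real.sin (((2 * K - 2 * i : ℕ) : ℝ) * θf L) / ((2 * K - 2 * i : ℕ) : ℝ)))
          - ∑ i ∈ Finset.range K,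
            (Nat.choose (2 * K) i : ℝ) *
              (Real.sin (((2 * K - 2 * i : ℕ) : ℝ) * θf 0) / ((2 * K - 2 * i : ℕ) : ℝ)) := by
      rw [← Finset.sum_sub_distrib]
      exact Finset.sum_congr rfl fun i _ => by ring
    rw [hd2]
    ring
  rw [hRHS]
  have hzp : ∀ y : ℝ, y ^ ((1:ℤ) - ((K + 2 : ℕ) : ℤ)) = (y ^ (K + 1))⁻¹ := by
    intro y
    rw [show (1:ℤ) - ((K + 2 : ℕ) : ℤ) = -((K + 1 : ℕ) : ℤ) by push_cast; ring, zpow_neg,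
      zpow_natCast]
  have hdF : ∀ x : ℝ,
      HasDerivAt F ((x ^ 2 + 2 * β * x + r ^ 2) ^ ((1:ℤ) - ((K + 2 : ℕ) : ℤ))) x := by
    intro x
    have hq := hqpos x
    set q : ℝ := x ^ 2 + 2 * β * x + r ^ 2 with hqdef
    have hsin : ∀ i ∈ Finset.range K,
        HasDerivAt (fun y : ℝ =>
            (Nat.choose (2 * K) i : ℝ) *
              (Real.sin (((2 * K - 2 * i : ℕ) : ℝ) * θf y) / ((2 * K - 2 * i : ℕ) : ℝ)))
          ((Nat.choose (2 * K) i : ℝ) *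
            (Real.cos (((2 * K - 2 * i : ℕ) : ℝ) * θf x) * (α / q))) x := by
      intro i hi
      rw [Finset.mem_range] at hi
      have hn : ((2 * K - 2 * i : ℕ) : ℝ) ≠ 0 := Nat.cast_ne_zero.mpr (by omega)
      have h1 : HasDerivAt (fun y : ℝ => ((2 * K - 2 * i : ℕ) : ℝ) * θf y)
          (((2 * K - 2 * i : ℕ) : ℝ) * (α / q)) x := (hdθ x).const_mul _
      have h2 := (Real.hasDerivAt_sin (((2 * K - 2 * i : ℕ) : ℝ) * θf x)).comp x h1
      have h3 := (h2.div_const ((2 * K - 2 * i : ℕ) : ℝ)).const_mul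
        (Nat.choose (2 * K) i : ℝ)
      refine h3.congr_deriv ?_
      symm
      field_simp
    have hsum := HasDerivAt.fun_sum hsin
    have hθx := (hdθ x).const_mul
      ((2:ℝ) ^ ((4:ℤ) - ((2 * (K + 2) : ℕ) : ℤ)) * (Nat.choose (2 * K) K : ℝ))
    have hFd := ((hsum.const_mul ((2:ℝ) ^ ((5:ℤ) - ((2 * (K + 2) : ℕ) : ℤ)))).add hθx).const_mul
      (α ^ ((3:ℤ) - ((2 * (K + 2) : ℕ) : ℤ)))
    refine hFd.congr_deriv ?_
    symm
    -- now prove the value equality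
    have hc2 : Real.cos (θf x) ^ 2 = α ^ 2 / q := by
      have h := Real.cos_sq_arctan ((x + β) / α)
      have hden : 1 + ((x + β) / α) ^ 2 = q / α ^ 2 := by
        rw [hqdef]
        field_simp
        nlinarith [hα2]
      rw [show θf x = Real.arctan ((x + β) / α) from rfl, h, hden, one_div_div]
    rw [hzp q]
    have hfac : ∑ i ∈ Finset.range K,
        (Nat.choose (2 * K) i : ℝ) *
          (Real.cos (((2 * K - 2 * i : ℕ) : ℝ) * θf x) * (α / q))
        = (∑ i ∈ Finset.range K,
            (Nat.choose (2 * K) i : ℝ) * Real.cos (((2 * K - 2 * i : ℕ) : ℝ) * θf x)) * (α / q) := by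
      rw [Finset.sum_mul]
      exact Finset.sum_congr rfl fun i _ => by ring
    rw [hfac]
    have hS := cos_pow_even K (θf x)
    have h2S : 2 * (∑ i ∈ Finset.range K,
          (Nat.choose (2 * K) i : ℝ) * Real.cos (((2 * K - 2 * i : ℕ) : ℝ) * θf x))
        + (Nat.choose (2 * K) K : ℝ) = 2 ^ (2 * K) * Real.cos (θf x) ^ (2 * K) := by
      rw [← mul_pow]; linarith [hS]
    have hcc : Real.cos (θf x) ^ (2 * K) = α ^ (2 * K) / q ^ K := by
      rw [pow_mul, hc2, div_pow, ← pow_mul]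
    have eA : α ^ ((3:ℤ) - ((2 * (K + 2) : ℕ) : ℤ)) = (α ^ (2 * K + 1))⁻¹ := by
      rw [show (3:ℤ) - ((2 * (K + 2) : ℕ) : ℤ) = -((2 * K + 1 : ℕ) : ℤ) by push_cast; ring,
        zpow_neg, zpow_natCast]
    have eB : (2:ℝ) ^ ((5:ℤ) - ((2 * (K + 2) : ℕ) : ℤ)) = ((2:ℝ) ^ (2 * K - 1))⁻¹ := by
      rw [show (5:ℤ) - ((2 * (K + 2) : ℕ) : ℤ) = -((2 * K - 1 : ℕ) : ℤ) by omega,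
        zpow_neg, zpow_natCast]
    have eC : (2:ℝ) ^ ((4:ℤ) - ((2 * (K + 2) : ℕ) : ℤ)) = ((2:ℝ) ^ (2 * K))⁻¹ := by
      rw [show (4:ℤ) - ((2 * (K + 2) : ℕ) : ℤ) = -((2 * K : ℕ) : ℤ) by omega,
        zpow_neg, zpow_natCast]
    rw [eA, eB, eC]
    have e2 : (2:ℝ) ^ (2 * K) = 2 * 2 ^ (2 * K - 1) := by
      rw [← pow_succ']
      congr 1
      omega
    have hSval : (∑ i ∈ Finset.range K,
          (Nat.choose (2 * K) i : ℝ) * Real.cos (((2 * K - 2 * i : ℕ) : ℝ) * θf x))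
        = (2 ^ (2 * K) * Real.cos (θf x) ^ (2 * K) - (Nat.choose (2 * K) K : ℝ)) / 2 := by
      linarith
    rw [hSval, hcc, e2]
    have h2n : (2:ℝ) ^ (2 * K - 1) ≠ 0 := by positivity
    rw [← hqdef]
    field_simp
    ring
  apply intervalIntegral.integral_eq_sub_of_hasDerivAt (fun t _ => hdF t)
  have hcont : Continuous fun t : ℝ => (t ^ 2 + 2 * β * t + r ^ 2) ^ ((1:ℤ) - ((K + 2 : ℕ) : ℤ)) := by
    have hc : Continuous fun t : ℝ => ((t ^ 2 + 2 * β * t + r ^ 2) ^ (K + 1))⁻¹ := by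
      refine Continuous.inv₀ ?_ fun t => pow_ne_zero _ (hqpos t).ne'
      continuity
    simpa only [hzp] using hc
  exact hcont.intervalIntegrable 0 L
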